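/- arXiv:1303.5802 — 3 statements merged into one kernel-verified Lean document; each statement's English description precedes it below -/
import Mathlib

section
/- (Strong duality for the per-line subproblem) Let Z̃ be a symmetric positive definite n×n real matrix, λ ≥ 0, and μ ∈ ℝⁿ. Then inf over x ∈ ℝⁿ of [(1/2) xᵀ Z̃ x + λ ‖x‖₂ − μᵀ x] equals the maximum over χ ∈ ℝⁿ with ‖χ‖₂ ≤ 1 of [−(1/2) (μ + λχ)ᵀ Z̃⁻¹ (μ + λχ)], and this maximum is attained at some χ with ‖χ‖₂ ≤ 1. -/
open Matrix

private lemma aux_limit_nonneg (C D : ℝ) (hC : 0 ≤ C)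
    (h : ∀ t : ℝ, 0 < t → t ≤ 1 → -(t * C) ≤ D) : 0 ≤ D := by
  by_contra h0
  push_neg at h0
  rcases eq_or_lt_of_le hC with hC0 | hC0
  · have := h 1 one_pos le_rfl
    nlinarith
  · have ht1 : 0 < min 1 (-D / (2 * C)) :=
      lt_min one_pos (div_pos (by linarith) (by linarith))
    have := h (min 1 (-D / (2 * C))) ht1 (min_le_left _ _)
    have h2 : min 1 (-D / (2 * C)) * C ≤ (-D / (2 * C)) * C :=
      mul_le_mul_of_nonneg_right (min_le_right _ _) hC
    have h3 : (-D / (2 * C)) * C = -D / 2 := by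
      field_simp
    nlinarith

private lemma quad_expand {n : ℕ} (M : Matrix (Fin n) (Fin n) ℝ)
    (hs : ∀ a b : Fin n → ℝ, a ⬝ᵥ (M *ᵥ b) = b ⬝ᵥ (M *ᵥ a))
    (a b : Fin n → ℝ) (t : ℝ) :
    (a + t • b) ⬝ᵥ (M *ᵥ (a + t • b))
      = a ⬝ᵥ (M *ᵥ a) + 2 * t * (b ⬝ᵥ (M *ᵥ a)) + t ^ 2 * (b ⬝ᵥ (M *ᵥ b)) := by
  have h := hs a b
  simp only [Matrix.mulVec_add, Matrix.mulVec_smul, dotProduct_add, add_dotProduct,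
    dotProduct_smul, smul_dotProduct, smul_eq_mul]
  linear_combination t * h

set_option maxHeartbeats 1000000 in
/-- Strong duality for the per-line subproblem: the primal infimum equals the
dual maximum over the unit ball, and the maximum is attained. -/
theorem stmt_13 (n : ℕ) (Z : Matrix (Fin n) (Fin n) ℝ) (hsym : Zᵀ = Z)
    (hpd : ∀ y : Fin n → ℝ, y ≠ 0 → 0 < y ⬝ᵥ (Z *ᵥ y))
    (lam : ℝ) (hlam : 0 ≤ lam) (μ : Fin n → ℝ) :
    ∃ χ : Fin n → ℝ, Real.sqrt (χ ⬝ᵥ χ) ≤ 1 ∧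
      (∀ χ' : Fin n → ℝ, Real.sqrt (χ' ⬝ᵥ χ') ≤ 1 →
        -(1/2) * ((μ + lam • χ') ⬝ᵥ (Z⁻¹ *ᵥ (μ + lam • χ')))
          ≤ -(1/2) * ((μ + lam • χ) ⬝ᵥ (Z⁻¹ *ᵥ (μ + lam • χ)))) ∧
      (⨅ x : Fin n → ℝ,
          ((1/2) * (x ⬝ᵥ (Z *ᵥ x)) + lam * Real.sqrt (x ⬝ᵥ x) - μ ⬝ᵥ x))
        = -(1/2) * ((μ + lam • χ) ⬝ᵥ (Z⁻¹ *ᵥ (μ + lam • χ))) := by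
  classical
  let E := EuclideanSpace ℝ (Fin n)
  let e := WithLp.equiv 2 (Fin n → ℝ)
  -- Euclidean norm vs dot product
  have hsd : ∀ y : Fin n → ℝ, Real.sqrt (y ⬝ᵥ y) = ‖e.symm y‖ := by
    intro y
    rw [EuclideanSpace.norm_eq]
    congr 1
    simp only [e, WithLp.equiv_symm_apply, PiLp.toLp_apply, Real.norm_eq_abs, sq_abs]
    simp [dotProduct, sq]
  have hinner : ∀ a b : Fin n → ℝ,
      (inner ℝ (e.symm a) (e.symm b) : ℝ) = a ⬝ᵥ b := by
    intro a b
    simp [e, PiLp.inner_apply, RCLike.inner_apply, dotProduct,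
      WithLp.equiv_symm_apply, PiLp.toLp_apply, mul_comm]
  -- Cauchy–Schwarz
  have hcs : ∀ a b : Fin n → ℝ,
      -(Real.sqrt (a ⬝ᵥ a) * Real.sqrt (b ⬝ᵥ b)) ≤ a ⬝ᵥ b := by
    intro a b
    have h := abs_real_inner_le_norm (e.symm a) (e.symm b)
    rw [hinner] at h
    rw [hsd, hsd]
    have := neg_abs_le (a ⬝ᵥ b)
    linarith
  -- invertibility of Z
  have hinj : Function.Injective Z.mulVec := by
    intro a b hab
    by_contra hne
    have hsub : Z *ᵥ (a - b) = 0 := by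
      rw [Matrix.mulVec_sub, hab, sub_self]
    have : (0 : ℝ) < (a - b) ⬝ᵥ (Z *ᵥ (a - b)) := hpd _ (sub_ne_zero.2 hne)
    rw [hsub, dotProduct_zero] at this
    exact lt_irrefl _ this
  have hdet : IsUnit Z.det :=
    (Matrix.isUnit_iff_isUnit_det Z).mp (Matrix.mulVec_injective_iff_isUnit.mp hinj)
  have hZin : ∀ y : Fin n → ℝ, Z *ᵥ (Z⁻¹ *ᵥ y) = y := by
    intro y
    rw [Matrix.mulVec_mulVec, Matrix.mul_nonsing_inv _ hdet, Matrix.one_mulVec]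
  -- symmetry of quadratic forms
  have hsymm : ∀ a b : Fin n → ℝ, a ⬝ᵥ (Z *ᵥ b) = b ⬝ᵥ (Z *ᵥ a) := by
    intro a b
    conv_lhs => rw [← hsym]
    rw [Matrix.dotProduct_mulVec, Matrix.vecMul_transpose, dotProduct_comm]
  have hsymi' : (Z⁻¹)ᵀ = Z⁻¹ := by rw [Matrix.transpose_nonsing_inv, hsym]
  have hsymi : ∀ a b : Fin n → ℝ, a ⬝ᵥ (Z⁻¹ *ᵥ b) = b ⬝ᵥ (Z⁻¹ *ᵥ a) := by
    intro a b
    conv_lhs => rw [← hsymi']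
    rw [Matrix.dotProduct_mulVec, Matrix.vecMul_transpose, dotProduct_comm]
  have hZnn : ∀ y : Fin n → ℝ, 0 ≤ y ⬝ᵥ (Z *ᵥ y) := by
    intro y
    rcases eq_or_ne y 0 with rfl | hy
    · simp
    · exact le_of_lt (hpd y hy)
  have hinn : ∀ y : Fin n → ℝ, 0 ≤ y ⬝ᵥ (Z⁻¹ *ᵥ y) := by
    intro y
    have h1 : y ⬝ᵥ (Z⁻¹ *ᵥ y) = (Z⁻¹ *ᵥ y) ⬝ᵥ (Z *ᵥ (Z⁻¹ *ᵥ y)) := by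
      rw [hZin y, dotProduct_comm]
    rw [h1]
    exact hZnn _
  -- the objective functions
  set f : (Fin n → ℝ) → ℝ :=
    fun x => (1/2) * (x ⬝ᵥ (Z *ᵥ x)) + lam * Real.sqrt (x ⬝ᵥ x) - μ ⬝ᵥ x with hf
  set g : (Fin n → ℝ) → ℝ :=
    fun χ' => -(1/2) * ((μ + lam • χ') ⬝ᵥ (Z⁻¹ *ᵥ (μ + lam • χ'))) with hg
  -- weak duality
  have hweak : ∀ χ' : Fin n → ℝ, Real.sqrt (χ' ⬝ᵥ χ') ≤ 1 → ∀ x : Fin n → ℝ,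
      g χ' ≤ f x := by
    intro χ' hχ' x
    set v := μ + lam • χ' with hv
    set w := Z⁻¹ *ᵥ v with hw
    have hq : 0 ≤ (x + (-1 : ℝ) • w) ⬝ᵥ (Z *ᵥ (x + (-1 : ℝ) • w)) := hZnn _
    rw [quad_expand Z hsymm x w (-1)] at hq
    have h1 : w ⬝ᵥ (Z *ᵥ x) = x ⬝ᵥ v := by
      rw [hsymm w x, hw, hZin]
    have h2 : w ⬝ᵥ (Z *ᵥ w) = v ⬝ᵥ w := by
      rw [dotProduct_comm]
      congr 1
      rw [hw, hZin]
    rw [h1, h2] at hq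
    have hvx : v ⬝ᵥ x = μ ⬝ᵥ x + lam * (χ' ⬝ᵥ x) := by
      rw [hv, add_dotProduct, smul_dotProduct, smul_eq_mul]
    have hxv : x ⬝ᵥ v = v ⬝ᵥ x := dotProduct_comm _ _
    have hcs1 : -(Real.sqrt (χ' ⬝ᵥ χ') * Real.sqrt (x ⬝ᵥ x)) ≤ χ' ⬝ᵥ x := hcs χ' x
    have hsx : 0 ≤ Real.sqrt (x ⬝ᵥ x) := Real.sqrt_nonneg _
    have hcs2 : -(Real.sqrt (x ⬝ᵥ x)) ≤ χ' ⬝ᵥ x := by nlinarith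
    have hcs3 : -(lam * Real.sqrt (x ⬝ᵥ x)) ≤ lam * (χ' ⬝ᵥ x) := by nlinarith
    have hgoal : g χ' = -(1/2) * (v ⬝ᵥ w) := rfl
    have hfgoal : f x = (1/2) * (x ⬝ᵥ (Z *ᵥ x)) + lam * Real.sqrt (x ⬝ᵥ x) - μ ⬝ᵥ x := rfl
    rw [hgoal, hfgoal]
    nlinarith [hq]
  -- existence of a dual maximizer by compactness
  have hcontg : Continuous (fun χe : E => g (e χe)) := by
    have h1 : Continuous g := by
      rw [hg]
      simp only [dotProduct, Matrix.mulVec]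
      fun_prop
    exact h1.comp (PiLp.continuous_ofLp 2 _)
  obtain ⟨χe, hχmem, hχmax⟩ :=
    (isCompact_closedBall (0 : E) 1).exists_isMaxOn
      ⟨0, by simp⟩ hcontg.continuousOn
  set χ := e χe with hχ
  have hesymm : e.symm χ = χe := by simp [hχ]
  have hχball : Real.sqrt (χ ⬝ᵥ χ) ≤ 1 := by
    rw [hsd, hesymm]
    simpa [dist_zero_right] using Metric.mem_closedBall.mp hχmem
  have hmax : ∀ χ' : Fin n → ℝ, Real.sqrt (χ' ⬝ᵥ χ') ≤ 1 → g χ' ≤ g χ := by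
    intro χ' hχ'
    have hmem : e.symm χ' ∈ Metric.closedBall (0 : E) 1 := by
      rw [Metric.mem_closedBall, dist_zero_right, ← hsd]
      exact hχ'
    have h := hχmax hmem
    simpa [hχ] using h
  -- the candidate primal point
  set v := μ + lam • χ with hvdef
  set xs := Z⁻¹ *ᵥ v with hxs
  -- key complementarity equation
  have hKey : lam * (χ ⬝ᵥ xs) + lam * Real.sqrt (xs ⬝ᵥ xs) = 0 := by
    rcases eq_or_lt_of_le hlam with hlam0 | hlam0
    · rw [← hlam0]; ring
    rcases eq_or_ne xs 0 with hxs0 | hxs0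
    · rw [hxs0]; simp
    -- xs ≠ 0, lam > 0
    have hsnn : 0 ≤ xs ⬝ᵥ xs := Finset.sum_nonneg fun i _ => mul_self_nonneg _
    have hspos : 0 < Real.sqrt (xs ⬝ᵥ xs) := by
      rw [hsd, norm_pos_iff]
      intro h
      apply hxs0
      have h2 := congrArg e h
      rwa [Equiv.apply_symm_apply, show e 0 = 0 from rfl] at h2
    set s := Real.sqrt (xs ⬝ᵥ xs) with hs
    have hss : s * s = xs ⬝ᵥ xs := Real.mul_self_sqrt hsnn
    set χhat : Fin n → ℝ := (-(s⁻¹)) • xs with hχhat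
    have hχhatball : Real.sqrt (χhat ⬝ᵥ χhat) ≤ 1 := by
      have hone : χhat ⬝ᵥ χhat = 1 := by
        rw [hχhat, smul_dotProduct, dotProduct_smul, smul_eq_mul, smul_eq_mul, ← hss]
        field_simp
      rw [hone, Real.sqrt_one]
    have hχhatxs : χhat ⬝ᵥ xs = -s := by
      rw [hχhat, smul_dotProduct, smul_eq_mul, ← hss]
      field_simp
    set d := χhat - χ with hd
    -- first-order optimality
    have hD : 0 ≤ lam * (d ⬝ᵥ xs) := by
      apply aux_limit_nonneg ((lam^2 / 2) * (d ⬝ᵥ (Z⁻¹ *ᵥ d)))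
      · have := hinn d
        positivity
      intro t ht0 ht1
      -- the perturbed point lies in the ball
      have hmemt : Real.sqrt ((χ + t • d) ⬝ᵥ (χ + t • d)) ≤ 1 := by
        rw [hsd]
        have heq : e.symm (χ + t • d) = (1 - t) • e.symm χ + t • e.symm χhat := by
          rw [hd]
          simp only [e, WithLp.equiv_symm_apply, WithLp.toLp_add, WithLp.toLp_smul, WithLp.toLp_sub]
          module
        rw [heq]
        have hn1 : ‖(1 - t) • e.symm χ‖ = (1 - t) * ‖e.symm χ‖ := by
          rw [norm_smul, Real.norm_eq_abs, abs_of_nonneg (by linarith : (0:ℝ) ≤ 1 - t)]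
        have hn2 : ‖t • e.symm χhat‖ = t * ‖e.symm χhat‖ := by
          rw [norm_smul, Real.norm_eq_abs, abs_of_nonneg ht0.le]
        have h1 : ‖e.symm χ‖ ≤ 1 := by rw [← hsd]; exact hχball
        have h2 : ‖e.symm χhat‖ ≤ 1 := by rw [← hsd]; exact hχhatball
        calc ‖(1 - t) • e.symm χ + t • e.symm χhat‖
            ≤ ‖(1 - t) • e.symm χ‖ + ‖t • e.symm χhat‖ := norm_add_le _ _
          _ = (1 - t) * ‖e.symm χ‖ + t * ‖e.symm χhat‖ := by rw [hn1, hn2]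
          _ ≤ (1 - t) * 1 + t * 1 := by
              have h3 : (0:ℝ) ≤ 1 - t := by linarith
              gcongr
          _ = 1 := by ring
      have hineq := hmax (χ + t • d) hmemt
      -- expand g at the perturbed point
      have hexp : g (χ + t • d)
          = -(1/2) * (v ⬝ᵥ (Z⁻¹ *ᵥ v) + 2 * (lam * t) * (d ⬝ᵥ (Z⁻¹ *ᵥ v))
              + (lam * t) ^ 2 * (d ⬝ᵥ (Z⁻¹ *ᵥ d))) := by
        have harg : μ + lam • (χ + t • d) = v + (lam * t) • d := by
          rw [hvdef]; module
        rw [hg]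
        simp only
        rw [harg, quad_expand Z⁻¹ hsymi v d (lam * t)]
      have hgχ : g χ = -(1/2) * (v ⬝ᵥ (Z⁻¹ *ᵥ v)) := rfl
      rw [hexp, hgχ] at hineq
      have hdv : d ⬝ᵥ (Z⁻¹ *ᵥ v) = d ⬝ᵥ xs := rfl
      rw [hdv] at hineq
      -- divide by t
      have h5 : 0 ≤ t * (lam * (d ⬝ᵥ xs) + t * ((lam^2/2) * (d ⬝ᵥ (Z⁻¹ *ᵥ d)))) := by
        nlinarith [hineq]
      have h6 : 0 ≤ lam * (d ⬝ᵥ xs) + t * ((lam^2/2) * (d ⬝ᵥ (Z⁻¹ *ᵥ d))) := by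
        by_contra hX
        push_neg at hX
        nlinarith
      linarith
    have hdxs : d ⬝ᵥ xs = -s - χ ⬝ᵥ xs := by
      rw [hd, sub_dotProduct, hχhatxs]
    rw [hdxs] at hD
    -- Cauchy–Schwarz on the other side
    have hcs1 : -(Real.sqrt (χ ⬝ᵥ χ) * s) ≤ χ ⬝ᵥ xs := hcs χ xs
    have hcs2 : -s ≤ χ ⬝ᵥ xs := by nlinarith [Real.sqrt_nonneg (χ ⬝ᵥ χ)]
    nlinarith
  -- strong duality: f xs = g χ
  have hfxs : f xs = g χ := by
    have hZxs : Z *ᵥ xs = v := hZin v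
    have h1 : xs ⬝ᵥ (Z *ᵥ xs) = xs ⬝ᵥ v := by rw [hZxs]
    have h2 : μ ⬝ᵥ xs = v ⬝ᵥ xs - lam * (χ ⬝ᵥ xs) := by
      rw [hvdef, add_dotProduct, smul_dotProduct, smul_eq_mul]; ring
    have h3 : xs ⬝ᵥ v = v ⬝ᵥ xs := dotProduct_comm _ _
    have h4 : g χ = -(1/2) * (v ⬝ᵥ xs) := rfl
    rw [hf]
    simp only
    rw [h1, h2, h3, h4]
    linarith [hKey]
  refine ⟨χ, hχball, fun χ' hχ' => hmax χ' hχ', ?_⟩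
  have hbdd : BddBelow (Set.range f) := by
    refine ⟨g χ, ?_⟩
    rintro y ⟨x, rfl⟩
    exact hweak χ hχball x
  apply le_antisymm
  · have h := ciInf_le hbdd xs
    rw [hfxs] at h
    exact h
  · exact le_ciInf (hweak χ hχball)
end

section
/- Let Z̃ be a symmetric positive semidefinite n×n real matrix, λ > 0, and μ ∈ ℝⁿ with ‖μ‖₂ ≤ λ. Define g(η) := η − (η/2) μᵀ (η Z̃ + (λ²/2) I)⁻¹ μ for η ≥ 0. Then g(η) ≥ 0 = g(0) for all η ≥ 0; in particular η = 0 is a global minimizer of g over [0, ∞). -/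
open Matrix

lemma dot_self_nonneg' {n : ℕ} (v : Fin n → ℝ) : 0 ≤ v ⬝ᵥ v :=
  Finset.sum_nonneg fun i _ => mul_self_nonneg _

/-- Thresholding in the scalar dual problem: if `‖μ‖₂ ≤ λ` then
`g(η) = η − (η/2) μᵀ (η Z̃ + (λ²/2) I)⁻¹ μ` satisfies `g(η) ≥ 0 = g(0)` for all
`η ≥ 0`; in particular `η = 0` is a global minimizer of `g` over `[0, ∞)`. -/
theorem stmt_17 (n : ℕ) (Z : Matrix (Fin n) (Fin n) ℝ) (hsym : Zᵀ = Z)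
    (hpsd : ∀ x : Fin n → ℝ, 0 ≤ x ⬝ᵥ (Z *ᵥ x))
    (lam : ℝ) (hlam : 0 < lam) (μ : Fin n → ℝ)
    (hμ : Real.sqrt (μ ⬝ᵥ μ) ≤ lam)
    (g : ℝ → ℝ)
    (hg : ∀ η, g η = η - (η/2) *
      (μ ⬝ᵥ ((η • Z + (lam^2/2) • (1 : Matrix (Fin n) (Fin n) ℝ))⁻¹ *ᵥ μ))) :
    g 0 = 0 ∧ ∀ η, 0 ≤ η → 0 ≤ g η := by
  constructor
  · rw [hg]; ring
  intro η hη
  rw [hg]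
  set M : Matrix (Fin n) (Fin n) ℝ := η • Z + (lam^2/2) • 1 with hMdef
  have hlam2 : 0 < lam^2/2 := by positivity
  -- quadratic form of M
  have hquad : ∀ x : Fin n → ℝ, x ⬝ᵥ (M *ᵥ x) = η * (x ⬝ᵥ (Z *ᵥ x)) + (lam^2/2) * (x ⬝ᵥ x) := by
    intro x
    simp [hMdef, Matrix.add_mulVec, Matrix.smul_mulVec, Matrix.one_mulVec,
      dotProduct_add, dotProduct_smul, smul_eq_mul]
  have hMpd : M.PosDef := by
    rw [Matrix.posDef_iff_dotProduct_mulVec]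
    constructor
    · have : Mᵀ = M := by
        simp [hMdef, Matrix.transpose_add, Matrix.transpose_smul, hsym]
      simpa [Matrix.IsHermitian, conjTranspose_eq_transpose_of_trivial] using this
    · intro x hx
      have hxx : 0 < x ⬝ᵥ x :=
        lt_of_le_of_ne (dot_self_nonneg' x) fun h => hx (dotProduct_self_eq_zero.mp h.symm)
      have := hpsd x
      have hq := hquad x
      simp only [star_trivial]
      rw [hq]
      nlinarith [mul_nonneg hη this]
  -- x = M⁻¹ μ solves M x = μ
  set x : Fin n → ℝ := M⁻¹ *ᵥ μ with hxdef
  have hMx : M *ᵥ x = μ := by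
    rw [hxdef, Matrix.mulVec_mulVec, Matrix.mul_nonsing_inv _ (isUnit_iff_isUnit_det _ |>.mp hMpd.isUnit), Matrix.one_mulVec]
  set t : ℝ := μ ⬝ᵥ x with htdef
  set s : ℝ := x ⬝ᵥ x with hsdef
  have hs : 0 ≤ s := dot_self_nonneg' x
  -- t = x ⬝ᵥ M x = η q + (λ²/2) s
  have ht1 : t = η * (x ⬝ᵥ (Z *ᵥ x)) + (lam^2/2) * s := by
    rw [htdef, dotProduct_comm, ← hMx, hquad]
  have htlb : (lam^2/2) * s ≤ t := by
    rw [ht1]; nlinarith [mul_nonneg hη (hpsd x)]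
  -- Cauchy-Schwarz
  have hcs : t^2 ≤ (μ ⬝ᵥ μ) * s := by
    calc t^2 = (∑ i, μ i * x i)^2 := by rw [htdef]; rfl
    _ ≤ (∑ i, μ i ^ 2) * (∑ i, x i ^ 2) := Finset.sum_mul_sq_le_sq_mul_sq _ _ _
    _ = (μ ⬝ᵥ μ) * s := by
      rw [hsdef]
      simp only [dotProduct, pow_two]
  have hμμ : μ ⬝ᵥ μ ≤ lam^2 := by
    have h0 : 0 ≤ μ ⬝ᵥ μ := dot_self_nonneg' μ
    calc μ ⬝ᵥ μ = Real.sqrt (μ ⬝ᵥ μ) ^ 2 := (Real.sq_sqrt h0).symm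
    _ ≤ lam ^ 2 := by nlinarith [Real.sqrt_nonneg (μ ⬝ᵥ μ)]
  have ht0 : 0 ≤ t := le_trans (mul_nonneg hlam2.le hs) htlb
  have ht2 : t ≤ 2 := by nlinarith [mul_le_mul_of_nonneg_right hμμ hs]
  nlinarith
end

section
/- (Proposition 2, multi-phase case, optimality certificate) Let Z̃ be a symmetric positive definite n×n real matrix, λ > 0, η > 0, and μ ∈ ℝⁿ. Define x := η (η Z̃ + (λ²/2) I)⁻¹ μ. If ‖x‖₂ = 2η/λ, then x is a global minimizer over ℝⁿ of f(y) := (1/2) yᵀ Z̃ y + λ ‖y‖₂ − μᵀ y. -/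
open Matrix

/-- Proposition 2, multi-phase case (optimality certificate): with
`x = η (η Z̃ + (λ²/2) I)⁻¹ μ`, if `‖x‖₂ = 2η/λ` then `x` is a global minimizer of
`f(y) = (1/2) yᵀ Z̃ y + λ‖y‖₂ − μᵀ y`. -/
theorem stmt_18 (n : ℕ) (Z : Matrix (Fin n) (Fin n) ℝ) (hsym : Zᵀ = Z)
    (hpd : ∀ y : Fin n → ℝ, y ≠ 0 → 0 < y ⬝ᵥ (Z *ᵥ y))
    (lam η : ℝ) (hlam : 0 < lam) (hη : 0 < η) (μ : Fin n → ℝ)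
    (x : Fin n → ℝ)
    (hx : x = η • ((η • Z + (lam^2/2) • (1 : Matrix (Fin n) (Fin n) ℝ))⁻¹ *ᵥ μ))
    (hnorm : Real.sqrt (x ⬝ᵥ x) = 2 * η / lam)
    (f : (Fin n → ℝ) → ℝ)
    (hf : ∀ y, f y = (1/2) * (y ⬝ᵥ (Z *ᵥ y)) + lam * Real.sqrt (y ⬝ᵥ y) - μ ⬝ᵥ y) :
    ∀ y, f x ≤ f y := by
  set A : Matrix (Fin n) (Fin n) ℝ := η • Z + (lam^2/2) • 1 with hA
  -- A is invertible
  have hselfnonneg : ∀ v : Fin n → ℝ, 0 ≤ v ⬝ᵥ v := fun v =>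
    Finset.sum_nonneg fun i _ => mul_self_nonneg _
  have hdet : IsUnit A.det := by
    rw [isUnit_iff_ne_zero]
    intro h0
    obtain ⟨v, hv, hAv⟩ := (Matrix.exists_mulVec_eq_zero_iff).2 h0
    have h1 : v ⬝ᵥ (A *ᵥ v) = 0 := by rw [hAv, dotProduct_zero]
    have h2 : 0 < v ⬝ᵥ (A *ᵥ v) := by
      rw [hA, add_mulVec, smul_mulVec, smul_mulVec, one_mulVec,
        dotProduct_add, dotProduct_smul, dotProduct_smul]
      have hvv : 0 < v ⬝ᵥ v :=
        lt_of_le_of_ne (hselfnonneg v) (fun h => hv (dotProduct_self_eq_zero.1 h.symm))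
      have := hpd v hv
      positivity
    linarith
  -- A *ᵥ x = η • μ
  have hAx : A *ᵥ x = η • μ := by
    rw [hx, mulVec_smul, mulVec_mulVec, Matrix.mul_nonsing_inv A hdet, one_mulVec]
  -- μ = Z *ᵥ x + c • x with c = lam^2/(2η)
  set c : ℝ := lam^2 / (2*η) with hc
  have hμ : μ = Z *ᵥ x + c • x := by
    have h1 : η • (Z *ᵥ x) + (lam^2/2) • x = η • μ := by
      rw [← hAx, hA, add_mulVec, smul_mulVec, smul_mulVec, one_mulVec]
    funext i
    have := congrFun h1 i
    simp only [Pi.add_apply, Pi.smul_apply, smul_eq_mul] at this ⊢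
    rw [hc]; field_simp; linarith
  -- abbreviations
  set sx : ℝ := Real.sqrt (x ⬝ᵥ x) with hsx
  have hsxpos : 0 < sx := by rw [hnorm]; positivity
  have hsx2 : sx * sx = x ⬝ᵥ x := Real.mul_self_sqrt (hselfnonneg x)
  have hcsx : c * sx = lam := by
    rw [hc, hnorm]; field_simp
  -- symmetry of Z
  have hZs : ∀ a b : Fin n → ℝ, a ⬝ᵥ (Z *ᵥ b) = b ⬝ᵥ (Z *ᵥ a) := by
    intro a b
    conv_lhs => rw [dotProduct_mulVec, ← hsym, vecMul_transpose]
    exact dotProduct_comm _ _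
  intro y
  set sy : ℝ := Real.sqrt (y ⬝ᵥ y) with hsy
  have hsynn : 0 ≤ sy := Real.sqrt_nonneg _
  have hsy2 : sy * sy = y ⬝ᵥ y := Real.mul_self_sqrt (hselfnonneg y)
  -- Cauchy–Schwarz
  have hCS : x ⬝ᵥ y ≤ sx * sy := by
    have h1 : (x ⬝ᵥ y)^2 ≤ (x ⬝ᵥ x) * (y ⬝ᵥ y) := by
      have := Finset.sum_mul_sq_le_sq_mul_sq Finset.univ x y
      simpa [dotProduct, sq] using this
    calc x ⬝ᵥ y ≤ |x ⬝ᵥ y| := le_abs_self _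
      _ = Real.sqrt ((x ⬝ᵥ y)^2) := (Real.sqrt_sq_eq_abs _).symm
      _ ≤ Real.sqrt ((x ⬝ᵥ x) * (y ⬝ᵥ y)) := Real.sqrt_le_sqrt h1
      _ = sx * sy := by rw [Real.sqrt_mul (hselfnonneg x)]
  -- quadratic term nonneg
  have hq : 0 ≤ (y - x) ⬝ᵥ (Z *ᵥ (y - x)) := by
    rcases eq_or_ne y x with h | h
    · simp [h]
    · exact le_of_lt (hpd _ (sub_ne_zero.2 h))
  have hqexp : (y - x) ⬝ᵥ (Z *ᵥ (y - x))
      = y ⬝ᵥ (Z *ᵥ y) - 2 * (x ⬝ᵥ (Z *ᵥ y)) + x ⬝ᵥ (Z *ᵥ x) := by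
    rw [mulVec_sub, sub_dotProduct, dotProduct_sub, dotProduct_sub, hZs y x]
    ring
  -- expand μ ⬝ᵥ y and μ ⬝ᵥ x
  have hμy : μ ⬝ᵥ y = x ⬝ᵥ (Z *ᵥ y) + c * (x ⬝ᵥ y) := by
    rw [hμ, add_dotProduct, smul_dotProduct, dotProduct_comm (Z *ᵥ x) y, hZs y x,
      smul_eq_mul]
  have hμx : μ ⬝ᵥ x = x ⬝ᵥ (Z *ᵥ x) + c * (x ⬝ᵥ x) := by
    rw [hμ, add_dotProduct, smul_dotProduct, dotProduct_comm (Z *ᵥ x) x, smul_eq_mul]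
  have hcx2 : c * (x ⬝ᵥ x) = lam * sx := by rw [← hsx2, ← mul_assoc, hcsx]
  rw [hf, hf, ← hsy, ← hsx, hμy, hμx, hcx2]
  have hcpos : 0 < c := by rw [hc]; positivity
  have hterm : c * (x ⬝ᵥ y) ≤ lam * sy := by
    calc c * (x ⬝ᵥ y) ≤ c * (sx * sy) := by
          exact mul_le_mul_of_nonneg_left hCS (le_of_lt hcpos)
      _ = lam * sy := by rw [← mul_assoc, hcsx]
  nlinarith [hq, hqexp]
end
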